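/- arXiv:2201.11603 — 3 statements merged into one kernel-verified Lean document; each statement's English description precedes it below -/
import Mathlib

section
/- The Laplace mechanism is (ε, 0)-differentially private: if f is a real-valued function on datasets with sensitivity at most Δ (i.e., |f(D) − f(D')| ≤ Δ whenever D ~ D'), then the mechanism M(D) = f(D) + Z, where Z is a Laplace random variable with scale Δ/ε, satisfies (ε, 0)-differential privacy. -/
open MeasureTheory

/-- The Laplace distribution with scale `b`, given by density
`(1/(2b)) * exp (-|x|/b)` with respect to Lebesgue measure. -/
noncomputable def laplace (b : ℝ) : Measure ℝ :=
  volume.withDensity (fun x => ENNReal.ofReal ((1 / (2 * b)) * Real.exp (-|x| / b)))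

lemma laplace_map_apply (b c : ℝ) {S : Set ℝ} (hS : MeasurableSet S) :
    (laplace b).map (fun z => c + z) S
      = ∫⁻ x in S, ENNReal.ofReal ((1 / (2 * b)) * Real.exp (-|x - c| / b)) := by
  rw [Measure.map_apply (measurable_const_add c) hS, laplace,
    withDensity_apply _ (hS.preimage (measurable_const_add c))]
  have hmp : MeasurePreserving (fun x : ℝ => c + x) volume volume :=
    measurePreserving_add_left volume c
  have := setLIntegral_map (μ := (volume : Measure ℝ)) hS
    (f := fun y => ENNReal.ofReal ((1 / (2 * b)) * Real.exp (-|y - c| / b)))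
    (g := fun x : ℝ => c + x) ?_ (measurable_const_add c)
  · rw [hmp.map_eq] at this
    rw [this]
    apply setLIntegral_congr_fun ((hS.preimage (measurable_const_add c)))
    intro z _
    dsimp only
    have : c + z - c = z := by ring
    rw [this]
  · exact ENNReal.measurable_ofReal.comp
      (((measurable_id.sub_const c).norm.neg.div_const b).exp.const_mul _)

theorem laplace_mechanism_dp
    {D : Type*} (nb : D → D → Prop) (f : D → ℝ)
    (Δ ε : ℝ) (hΔ : 0 < Δ) (hε : 0 < ε)
    (hsens : ∀ d d', nb d d' → |f d - f d'| ≤ Δ) :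
    ∀ d d', nb d d' → ∀ S : Set ℝ, MeasurableSet S →
      (laplace (Δ / ε)).map (fun z => f d + z) S
        ≤ ENNReal.ofReal (Real.exp ε) * (laplace (Δ / ε)).map (fun z => f d' + z) S := by
  intro d d' hdd S hS
  have hb : 0 < Δ / ε := div_pos hΔ hε
  rw [laplace_map_apply _ (f d) hS, laplace_map_apply _ (f d') hS,
    ← lintegral_const_mul' _ _ ENNReal.ofReal_ne_top]
  refine lintegral_mono fun x => ?_
  rw [← ENNReal.ofReal_mul (Real.exp_nonneg ε)]
  apply ENNReal.ofReal_le_ofReal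
  rw [show Real.exp ε * (1 / (2 * (Δ / ε)) * Real.exp (-|x - f d'| / (Δ / ε)))
      = 1 / (2 * (Δ / ε)) * (Real.exp ε * Real.exp (-|x - f d'| / (Δ / ε))) by ring,
    ← Real.exp_add]
  apply mul_le_mul_of_nonneg_left _ (by positivity)
  apply Real.exp_le_exp.mpr
  have h1 : |x - f d'| - |x - f d| ≤ Δ := by
    have h0 := abs_sub_abs_le_abs_sub (x - f d') (x - f d)
    have h2 : |x - f d' - (x - f d)| = |f d - f d'| := by
      rw [show x - f d' - (x - f d) = f d - f d' by ring]
    linarith [hsens d d' hdd]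
  have heq : ε + -|x - f d'| / (Δ / ε) = (Δ - |x - f d'|) / (Δ / ε) := by
    field_simp
    ring
  rw [heq]
  gcongr
  linarith
end

section
/- Laplace thresholding for key selection on a single key: let c(D) denote the number of distinct users contributing at least one record to a fixed key k, where c changes by at most 1 between user-level neighbors. Let τ ≥ 1 and ε > 0, and define the mechanism that reports 'retain' if c(D) + Z > τ, where Z ~ Laplace(1/ε), and 'drop' otherwise, with the additional rule that if c(D) = 0 the mechanism always reports 'drop'. Then this mechanism is (ε, δ)-differentially private where δ = (1/2)·exp(−ε(τ − 1)). -/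
open MeasureTheory

/-- The thresholding mechanism: report `true` (retain) iff `c d + Z > τ` for Laplace
noise `Z` of scale `1/ε`, except that when `c d = 0` it always reports `false` (drop). -/
noncomputable def thresholdMechanism {D : Type*} (c : D → ℕ) (ε τ : ℝ) (d : D) :
    Measure Bool :=
  if c d = 0 then Measure.dirac false
  else (laplace (1 / ε)).map (fun z => decide (τ < (c d : ℝ) + z))

namespace LapDPAux

open Set Real
open scoped ENNReal

variable {ε : ℝ}

lemma lap_eq (hε : 0 < ε) :
    laplace (1 / ε)
      = volume.withDensity (fun x => ENNReal.ofReal ((ε / 2) * Real.exp (-(ε * |x|)))) := by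
  unfold laplace
  congr 1
  funext x
  have h1 : 1 / (2 * (1 / ε)) = ε / 2 := by field_simp
  have h2 : -|x| / (1 / ε) = -(ε * |x|) := by rw [one_div, div_inv_eq_mul]; ring
  rw [h1, h2]

lemma lap_apply (hε : 0 < ε) (A : Set ℝ) (hA : MeasurableSet A) :
    laplace (1 / ε) A = ∫⁻ x in A, ENNReal.ofReal ((ε / 2) * Real.exp (-(ε * |x|))) := by
  rw [lap_eq hε, withDensity_apply _ hA]

lemma int_exp_Ioi (hε : 0 < ε) (t : ℝ) :
    ∫ x in Ioi t, Real.exp (-(ε * x)) = Real.exp (-(ε * t)) / ε := by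
  have hint : IntegrableOn (fun x => Real.exp (-(ε * x))) (Ioi t) := by
    simpa [neg_mul] using exp_neg_integrableOn_Ioi t hε
  have hderiv : ∀ x ∈ Ici t,
      HasDerivAt (fun y => -Real.exp (-(ε * y)) / ε) (Real.exp (-(ε * x))) x := by
    intro x _
    have h : HasDerivAt (fun y : ℝ => -(ε * y)) (-ε) x := by
      exact (((hasDerivAt_id x).const_mul ε).neg).congr_deriv (by simp)
    have H := (h.exp.neg).div_const ε
    have he : -(Real.exp (-(ε * x)) * -ε) / ε = Real.exp (-(ε * x)) := by
      field_simp
    exact he ▸ H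
  have htend : Filter.Tendsto (fun y => -Real.exp (-(ε * y)) / ε) Filter.atTop (nhds 0) := by
    have h1 : Filter.Tendsto (fun y : ℝ => -(ε * y)) Filter.atTop Filter.atBot :=
      Filter.tendsto_neg_atTop_atBot.comp (Filter.Tendsto.const_mul_atTop hε Filter.tendsto_id)
    have h2 : Filter.Tendsto (fun y => Real.exp (-(ε * y))) Filter.atTop (nhds 0) :=
      Real.tendsto_exp_atBot.comp h1
    simpa using (h2.neg).div_const ε
  rw [integral_Ioi_of_hasDerivAt_of_tendsto' hderiv hint htend]
  ring

lemma lap_Ioi (hε : 0 < ε) {t : ℝ} (ht : 0 ≤ t) :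
    laplace (1 / ε) (Ioi t) = ENNReal.ofReal ((1 / 2) * Real.exp (-(ε * t))) := by
  rw [lap_apply hε _ measurableSet_Ioi]
  rw [setLIntegral_congr_fun_ae measurableSet_Ioi
    (Filter.Eventually.of_forall (fun x (hx : x ∈ Ioi t) => by
      rw [abs_of_pos (ht.trans_lt hx)]))]
  have hint : Integrable (fun x => (ε / 2) * Real.exp (-(ε * x)))
      (volume.restrict (Ioi t)) := by
    have : IntegrableOn (fun x => Real.exp (-(ε * x))) (Ioi t) := by
      simpa [neg_mul] using exp_neg_integrableOn_Ioi t hε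
    exact this.const_mul _
  rw [← ofReal_integral_eq_lintegral_ofReal hint
    (Filter.Eventually.of_forall (fun x => by positivity))]
  congr 1
  rw [integral_const_mul, int_exp_Ioi hε]
  field_simp

lemma lintegral_neg (f : ℝ → ℝ≥0∞) : (∫⁻ x, f (-x)) = ∫⁻ x, f x := by
  calc (∫⁻ x, f (-x)) = ∫⁻ x, f x ∂((volume : Measure ℝ).map (MeasurableEquiv.neg ℝ)) :=
        (lintegral_map_equiv f (MeasurableEquiv.neg ℝ)).symm
    _ = ∫⁻ x, f x := by
        have : Measure.map (⇑(MeasurableEquiv.neg ℝ)) (volume : Measure ℝ) = volume := by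
          simpa using Measure.map_neg_eq_self (volume : Measure ℝ)
        rw [this]

lemma lap_Iic_zero (hε : 0 < ε) :
    laplace (1 / ε) (Iic (0 : ℝ)) = ENNReal.ofReal (1 / 2) := by
  set g : ℝ → ℝ≥0∞ := fun x => ENNReal.ofReal ((ε / 2) * Real.exp (-(ε * |x|))) with hg
  have hgg : ∀ x, (Iic (0:ℝ)).indicator g (-x) = (Ici (0:ℝ)).indicator g x := by
    intro x
    by_cases hx : (0:ℝ) ≤ x
    · rw [indicator_of_mem (by simpa using hx), indicator_of_mem (by simpa using hx)]
      simp [hg, abs_neg]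
    · rw [indicator_of_notMem (by simpa using hx), indicator_of_notMem (by simpa using hx)]
  calc laplace (1 / ε) (Iic (0:ℝ))
      = ∫⁻ x, (Iic (0:ℝ)).indicator g x := by
        rw [lap_apply hε _ measurableSet_Iic, lintegral_indicator measurableSet_Iic]
    _ = ∫⁻ x, (Iic (0:ℝ)).indicator g (-x) := (lintegral_neg _).symm
    _ = ∫⁻ x, (Ici (0:ℝ)).indicator g x := by simp_rw [hgg]
    _ = ∫⁻ x in Ici (0:ℝ), g x := by rw [lintegral_indicator measurableSet_Ici]
    _ = ∫⁻ x in Ioi (0:ℝ), g x := (setLIntegral_congr Ioi_ae_eq_Ici).symm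
    _ = laplace (1 / ε) (Ioi (0:ℝ)) := (lap_apply hε _ measurableSet_Ioi).symm
    _ = ENNReal.ofReal (1 / 2) := by
        rw [lap_Ioi hε le_rfl]; norm_num

lemma lap_univ (hε : 0 < ε) : laplace (1 / ε) (univ : Set ℝ) = 1 := by
  have h : (univ : Set ℝ) = Iic 0 ∪ Ioi 0 := Iic_union_Ioi.symm
  rw [h, measure_union (Iic_disjoint_Ioi le_rfl) measurableSet_Ioi,
    lap_Iic_zero hε, lap_Ioi hε le_rfl]
  rw [← ENNReal.ofReal_add (by norm_num) (by positivity)]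
  norm_num

lemma lap_le_one (hε : 0 < ε) (A : Set ℝ) : laplace (1 / ε) A ≤ 1 := by
  rw [← lap_univ hε]; exact measure_mono (subset_univ A)

lemma lap_shift (hε : 0 < ε) {s : ℝ} (hs : |s| ≤ 1) {A : Set ℝ} (hA : MeasurableSet A) :
    laplace (1 / ε) A
      ≤ ENNReal.ofReal (Real.exp ε) * laplace (1 / ε) ((fun x => x + s) ⁻¹' A) := by
  have hA' : MeasurableSet ((fun x => x + s) ⁻¹' A) := hA.preimage (measurable_add_const s)
  set g : ℝ → ℝ≥0∞ := fun x => ENNReal.ofReal ((ε / 2) * Real.exp (-(ε * |x|))) with hg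
  have key : ∀ x, A.indicator g (x + s)
      ≤ ENNReal.ofReal (Real.exp ε) * ((fun x => x + s) ⁻¹' A).indicator g x := by
    intro x
    by_cases hx : x + s ∈ A
    · rw [indicator_of_mem hx, indicator_of_mem (by exact hx)]
      rw [hg]
      rw [← ENNReal.ofReal_mul (Real.exp_pos ε).le]
      apply ENNReal.ofReal_le_ofReal
      have h1 : |x| - |x + s| ≤ 1 := by
        have h := abs_sub_abs_le_abs_sub x (x + s)
        have hxx : x - (x + s) = -s := by ring
        rw [hxx, abs_neg] at h
        linarith
      have h2 : Real.exp (-(ε * |x + s|)) ≤ Real.exp ε * Real.exp (-(ε * |x|)) := by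
        rw [← Real.exp_add]
        apply Real.exp_le_exp.mpr
        have := mul_le_mul_of_nonneg_left h1 hε.le
        nlinarith
      calc (ε / 2) * Real.exp (-(ε * |x + s|))
          ≤ (ε / 2) * (Real.exp ε * Real.exp (-(ε * |x|))) :=
            mul_le_mul_of_nonneg_left h2 (by linarith)
        _ = Real.exp ε * ((ε / 2) * Real.exp (-(ε * |x|))) := by ring
    · rw [indicator_of_notMem hx, indicator_of_notMem (by exact hx)]
      simp
  calc laplace (1 / ε) A = ∫⁻ x, A.indicator g x := by
        rw [lap_apply hε _ hA, lintegral_indicator hA]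
    _ = ∫⁻ x, A.indicator g (x + s) := (lintegral_add_right_eq_self _ s).symm
    _ ≤ ∫⁻ x, ENNReal.ofReal (Real.exp ε) * ((fun x => x + s) ⁻¹' A).indicator g x :=
        lintegral_mono key
    _ = ENNReal.ofReal (Real.exp ε) * ∫⁻ x, ((fun x => x + s) ⁻¹' A).indicator g x :=
        lintegral_const_mul' _ _ ENNReal.ofReal_ne_top
    _ = ENNReal.ofReal (Real.exp ε) * laplace (1 / ε) ((fun x => x + s) ⁻¹' A) := by
        rw [lintegral_indicator hA', ← lap_apply hε _ hA']

lemma hf_meas (τ a : ℝ) : Measurable (fun z : ℝ => decide (τ < a + z)) := by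
  have h : (fun z : ℝ => decide (τ < a + z)) = fun z => if τ - a < z then true else false := by
    funext z
    by_cases h : τ - a < z
    · simp only [if_pos h, decide_eq_true_eq]; linarith
    · simp only [if_neg h, decide_eq_false_iff_not]; intro hc; exact h (by linarith)
  rw [h]
  exact Measurable.ite measurableSet_Ioi measurable_const measurable_const

lemma preim_true (τ a : ℝ) :
    (fun z : ℝ => decide (τ < a + z)) ⁻¹' {true} = Ioi (τ - a) := by
  ext z
  simp only [mem_preimage, mem_singleton_iff, decide_eq_true_eq, mem_Ioi]
  constructor <;> intro h <;> linarith

lemma preim_false (τ a : ℝ) :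
    (fun z : ℝ => decide (τ < a + z)) ⁻¹' {false} = Iic (τ - a) := by
  ext z
  simp only [mem_preimage, mem_singleton_iff, decide_eq_false_iff_not, not_lt, mem_Iic]
  constructor <;> intro h <;> linarith

lemma mech_true (hε : 0 < ε) (τ a : ℝ) :
    (laplace (1 / ε)).map (fun z => decide (τ < a + z)) {true}
      = laplace (1 / ε) (Ioi (τ - a)) := by
  rw [Measure.map_apply (hf_meas τ a) (measurableSet_singleton true), preim_true]

lemma mech_false (hε : 0 < ε) (τ a : ℝ) :
    (laplace (1 / ε)).map (fun z => decide (τ < a + z)) {false}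
      = laplace (1 / ε) (Iic (τ - a)) := by
  rw [Measure.map_apply (hf_meas τ a) (measurableSet_singleton false), preim_false]

lemma mech_univ (hε : 0 < ε) (τ a : ℝ) :
    (laplace (1 / ε)).map (fun z => decide (τ < a + z)) (univ : Set Bool) = 1 := by
  rw [Measure.map_apply (hf_meas τ a) MeasurableSet.univ, preimage_univ, lap_univ hε]

end LapDPAux

open LapDPAux Set Real
open scoped ENNReal

theorem laplace_thresholding_dp
    {D : Type*} (nb : D → D → Prop) (c : D → ℕ)
    (hnb_dist : ∀ d d', nb d d' → c d ≤ c d' + 1 ∧ c d' ≤ c d + 1)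
    (hnb_zero : ∀ d d', nb d d' → (c d = 0 → c d' ≤ 1))
    (τ ε : ℝ) (hτ : 1 ≤ τ) (hε : 0 < ε) :
    ∀ d d', nb d d' → ∀ S : Set Bool,
      thresholdMechanism c ε τ d S
        ≤ ENNReal.ofReal (Real.exp ε) * thresholdMechanism c ε τ d' S
          + ENNReal.ofReal ((1 / 2) * Real.exp (-(ε * (τ - 1)))) := by
  intro d d' hnb S
  set E : ℝ≥0∞ := ENNReal.ofReal (Real.exp ε) with hE
  set δ' : ℝ≥0∞ := ENNReal.ofReal ((1 / 2) * Real.exp (-(ε * (τ - 1)))) with hδ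
  have hE1 : 1 ≤ E := by
    rw [hE, ENNReal.one_le_ofReal]; exact Real.one_le_exp hε.le
  have hδeq : δ' = laplace (1 / ε) (Ioi (τ - 1)) := by
    rw [hδ, lap_Ioi hε (by linarith : (0:ℝ) ≤ τ - 1)]
  have hδ1 : δ' ≤ 1 := by
    rw [hδ]
    apply ENNReal.ofReal_le_one.mpr
    have : Real.exp (-(ε * (τ - 1))) ≤ 1 :=
      Real.exp_le_one_iff.mpr (by nlinarith)
    linarith
  unfold thresholdMechanism
  by_cases hd : c d = 0
  · rw [if_pos hd]
    by_cases hfS : false ∈ S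
    · have hdS : (Measure.dirac false) S = 1 := by
        rw [Measure.dirac_apply]; simp [Set.indicator, hfS]
      rw [hdS]
      by_cases hd' : c d' = 0
      · rw [if_pos hd', hdS]
        exact le_trans hE1 (le_trans (by rw [mul_one]) le_self_add)
      · rw [if_neg hd']
        have hc1 : c d' = 1 := by have := hnb_zero d d' hnb hd; omega
        have hca : ((c d' : ℕ) : ℝ) = 1 := by rw [hc1]; norm_num
        rw [hca]
        have hsub : laplace (1 / ε) (Iic (τ - 1))
            ≤ (laplace (1 / ε)).map (fun z => decide (τ < (1 : ℝ) + z)) S := by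
          have h1 : (laplace (1 / ε)).map (fun z => decide (τ < (1 : ℝ) + z)) {false}
              ≤ (laplace (1 / ε)).map (fun z => decide (τ < (1 : ℝ) + z)) S :=
            measure_mono (singleton_subset_iff.mpr hfS)
          rw [mech_false hε] at h1
          simpa using h1
        have hIic : laplace (1 / ε) (Iic (τ - 1)) = 1 - δ' := by
          rw [← compl_Ioi, measure_compl measurableSet_Ioi
            (lt_of_le_of_lt (lap_le_one hε _) ENNReal.one_lt_top).ne,
            lap_univ hε, ← hδeq]
        calc (1:ℝ≥0∞) = (1 - δ') + δ' := (tsub_add_cancel_of_le hδ1).symm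
          _ ≤ E * ((laplace (1 / ε)).map (fun z => decide (τ < (1 : ℝ) + z)) S) + δ' := by
              apply add_le_add_left
              exact le_trans (hIic ▸ hsub) (le_mul_of_one_le_left' hE1)
    · have hdS : (Measure.dirac false) S = 0 := by
        rw [Measure.dirac_apply]; simp [Set.indicator, hfS]
      rw [hdS]
      exact zero_le
  · rw [if_neg hd]
    by_cases hd' : c d' = 0
    · rw [if_pos hd']
      have hc1 : c d = 1 := by have := (hnb_dist d d' hnb).1; omega
      by_cases hfS : false ∈ S
      · have hdS : (Measure.dirac false) S = 1 := by
          rw [Measure.dirac_apply]; simp [Set.indicator, hfS]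
        rw [hdS, mul_one]
        have hle : (laplace (1 / ε)).map (fun z => decide (τ < (c d : ℝ) + z)) S ≤ 1 := by
          rw [← mech_univ hε τ (c d : ℝ)]
          exact measure_mono (subset_univ S)
        exact le_trans hle (le_trans hE1 le_self_add)
      · have hca : ((c d : ℕ) : ℝ) = 1 := by rw [hc1]; norm_num
        rw [hca]
        have hsub : S ⊆ {true} := by
          intro b hb
          cases b
          · exact absurd hb hfS
          · rfl
        have h1 : (laplace (1 / ε)).map (fun z => decide (τ < (1 : ℝ) + z)) S
            ≤ (laplace (1 / ε)).map (fun z => decide (τ < (1 : ℝ) + z)) {true} :=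
          measure_mono hsub
        rw [mech_true hε] at h1
        have h2 : (laplace (1 / ε)).map (fun z => decide (τ < (1 : ℝ) + z)) S ≤ δ' := by
          rw [hδeq]
          simpa using h1
        exact le_trans h2 le_add_self
    · rw [if_neg hd']
      have h1 := (hnb_dist d d' hnb).1
      have h2 := (hnb_dist d d' hnb).2
      have hdist : |(c d' : ℝ) - (c d : ℝ)| ≤ 1 := by
        rw [abs_le]
        constructor
        · have : (c d : ℝ) ≤ (c d' : ℝ) + 1 := by exact_mod_cast h1
          linarith
        · have : (c d' : ℝ) ≤ (c d : ℝ) + 1 := by exact_mod_cast h2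
          linarith
      by_cases htS : true ∈ S <;> by_cases hfS : false ∈ S
      · have hSu : S = univ := eq_univ_of_forall (fun b => by cases b <;> assumption)
        rw [hSu, mech_univ hε, mech_univ hε, mul_one]
        exact le_trans hE1 le_self_add
      · have hSt : S = {true} := by
          ext b; cases b <;> simp [hfS, htS]
        rw [hSt, mech_true hε, mech_true hε]
        have hkey := lap_shift hε (s := (c d' : ℝ) - (c d : ℝ)) hdist
          (measurableSet_Ioi (a := τ - (c d : ℝ)))
        have hpre : (fun x => x + ((c d' : ℝ) - (c d : ℝ))) ⁻¹' (Ioi (τ - (c d : ℝ)))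
            = Ioi (τ - (c d' : ℝ)) := by
          ext x
          simp only [mem_preimage, mem_Ioi]
          constructor <;> intro h <;> linarith
        rw [hpre] at hkey
        exact le_trans hkey le_self_add
      · have hSf : S = {false} := by
          ext b; cases b <;> simp [hfS, htS]
        rw [hSf, mech_false hε, mech_false hε]
        have hkey := lap_shift hε (s := (c d' : ℝ) - (c d : ℝ)) hdist
          (measurableSet_Iic (a := τ - (c d : ℝ)))
        have hpre : (fun x => x + ((c d' : ℝ) - (c d : ℝ))) ⁻¹' (Iic (τ - (c d : ℝ)))
            = Iic (τ - (c d' : ℝ)) := by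
          ext x
          simp only [mem_preimage, mem_Iic]
          constructor <;> intro h <;> linarith
        rw [hpre] at hkey
        exact le_trans hkey le_self_add
      · have hSe : S = ∅ := eq_empty_iff_forall_notMem.mpr (fun b => by cases b <;> assumption)
        rw [hSe]
        simp
end

section
/- Key selection output stability: with each user contributing to at most L keys, the function mapping a dataset to its vector of per-key distinct-user counts, restricted to keys with nonzero count, changes as follows between user-level neighbors D ~ D': the set of keys with nonzero count in exactly one of D, D' has size at most L. Consequently, a key-selection mechanism that applies an (ε₀, δ₀)-DP retain/drop decision independently to each key's count (and always drops keys with zero count, where the per-key decision satisfies the (ε₀,δ₀) inequality also between counts 0 and 1 with the zero-count side forced to drop) is (L·ε₀, L·δ₀)-differentially private as a mechanism outputting the retained key set. -/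
open MeasureTheory Finset
open scoped ENNReal

/-- The distinct-user count for key `k`: the number of present users whose key set
contains `k`, where `f u` is user `u`'s key set. -/
def keyCount {U κ : Type*} [DecidableEq κ] (f : U → Finset κ) (E : Finset U) (k : κ) : ℕ :=
  (E.filter (fun v => k ∈ f v)).card

/-- Splitting a sum of products over functions according to the value at one coordinate. -/
lemma dp_split_sum {κ : Type*} [DecidableEq κ] (x : κ → Bool → ℝ≥0∞) (k0 : κ)
    (s' : Finset κ) (hk0 : k0 ∉ s') (T : Finset (κ → Bool)) :
    ∑ g ∈ T, ∏ k ∈ insert k0 s', x k (g k)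
      = x k0 true * ∑ g ∈ T.filter (fun g => g k0 = true), ∏ k ∈ s', x k (g k)
        + x k0 false * ∑ g ∈ T.filter (fun g => ¬ g k0 = true), ∏ k ∈ s', x k (g k) := by
  rw [← Finset.sum_filter_add_sum_filter_not T (fun g => g k0 = true)]
  congr 1
  · rw [Finset.mul_sum]
    refine Finset.sum_congr rfl fun g hg => ?_
    rw [Finset.prod_insert hk0, (Finset.mem_filter.mp hg).2]
  · rw [Finset.mul_sum]
    refine Finset.sum_congr rfl fun g hg => ?_
    have hb : g k0 = false := by simpa using (Finset.mem_filter.mp hg).2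
    rw [Finset.prod_insert hk0, hb]

/-- If the restriction to `s` is injective on `T`, the sum of products of probability
weights over `s` is at most `1`. -/
lemma dp_sum_prod_le_one {κ : Type*} [DecidableEq κ] (w : κ → Bool → ℝ≥0∞)
    (hw : ∀ k, w k true + w k false = 1) :
    ∀ s : Finset κ, ∀ T : Finset (κ → Bool),
      (∀ g ∈ T, ∀ g' ∈ T, (∀ k ∈ s, g k = g' k) → g = g') →
      ∑ g ∈ T, ∏ k ∈ s, w k (g k) ≤ 1 := by
  intro s
  induction s using Finset.induction_on with
  | empty =>
    intro T hinj
    simp only [Finset.prod_empty, Finset.sum_const, nsmul_eq_mul, mul_one]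
    have hT : T.card ≤ 1 := Finset.card_le_one.mpr (fun a ha b hb => hinj a ha b hb (by simp))
    exact_mod_cast hT
  | @insert k0 s' hk0 ih =>
    intro T hinj
    rw [dp_split_sum w k0 s' hk0 T]
    have ht : ∑ g ∈ T.filter (fun g => g k0 = true), ∏ k ∈ s', w k (g k) ≤ 1 := by
      refine ih _ fun g hg g' hg' hagree => ?_
      refine hinj g (Finset.mem_filter.mp hg).1 g' (Finset.mem_filter.mp hg').1 fun k hk => ?_
      rcases Finset.mem_insert.mp hk with rfl | hk
      · rw [(Finset.mem_filter.mp hg).2, (Finset.mem_filter.mp hg').2]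
      · exact hagree k hk
    have hf : ∑ g ∈ T.filter (fun g => ¬ g k0 = true), ∏ k ∈ s', w k (g k) ≤ 1 := by
      refine ih _ fun g hg g' hg' hagree => ?_
      refine hinj g (Finset.mem_filter.mp hg).1 g' (Finset.mem_filter.mp hg').1 fun k hk => ?_
      rcases Finset.mem_insert.mp hk with rfl | hk
      · have h1 : g k = false := by simpa using (Finset.mem_filter.mp hg).2
        have h2 : g' k = false := by simpa using (Finset.mem_filter.mp hg').2
        rw [h1, h2]
      · exact hagree k hk
    calc w k0 true * ∑ g ∈ T.filter (fun g => g k0 = true), ∏ k ∈ s', w k (g k)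
          + w k0 false * ∑ g ∈ T.filter (fun g => ¬ g k0 = true), ∏ k ∈ s', w k (g k)
        ≤ w k0 true * 1 + w k0 false * 1 :=
          add_le_add (mul_le_mul_right ht _) (mul_le_mul_right hf _)
      _ = 1 := by rw [mul_one, mul_one, hw k0]

/-- The basic `(ε, δ)` inequality for expectations of `[0,1]`-valued functions on `Bool`. -/
lemma dp_bool_exp_aux (wt wf vt vf qt qf c d : ℝ≥0∞) (hc : 1 ≤ c)
    (hw : wt + wf = 1) (hv : vt + vf = 1) (hqt : qt ≤ 1) (hle : qf ≤ qt)
    (ht : wt ≤ c * vt + d) :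
    wt * qt + wf * qf ≤ c * (vt * qt + vf * qf) + d := by
  set Δ := qt - qf with hΔdef
  have hqt' : qt = qf + Δ := (add_tsub_cancel_of_le hle).symm
  have hΔ1 : Δ ≤ 1 := le_trans (le_trans le_add_self hqt'.symm.le) hqt
  have hL : wt * qt + wf * qf = qf + wt * Δ := by
    rw [hqt', mul_add]
    have : wt * qf + wt * Δ + wf * qf = (wt + wf) * qf + wt * Δ := by ring
    rw [this, hw, one_mul]
  have hRe : c * (vt * qt + vf * qf) + d = c * qf + c * (vt * Δ) + d := by
    have h2 : vt * qt + vf * qf = qf + vt * Δ := by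
      rw [hqt']
      have : vt * (qf + Δ) + vf * qf = (vt + vf) * qf + vt * Δ := by ring
      rw [this, hv, one_mul]
    rw [h2, mul_add]
  rw [hL, hRe]
  calc qf + wt * Δ ≤ qf + (c * vt + d) * Δ := add_le_add_right (mul_le_mul_left ht Δ) _
    _ = qf + c * (vt * Δ) + d * Δ := by ring
    _ ≤ c * qf + c * (vt * Δ) + d :=
        add_le_add (add_le_add_left (le_mul_of_one_le_left' hc) _)
          (mul_le_of_le_one_right' hΔ1)

lemma dp_bool_exp (w v q : Bool → ℝ≥0∞) (c d : ℝ≥0∞) (hc : 1 ≤ c)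
    (hw : w true + w false = 1) (hv : v true + v false = 1)
    (hq : ∀ b, q b ≤ 1) (h : ∀ b, w b ≤ c * v b + d) :
    w true * q true + w false * q false
      ≤ c * (v true * q true + v false * q false) + d := by
  rcases le_total (q false) (q true) with hle | hle
  · exact dp_bool_exp_aux _ _ _ _ _ _ _ _ hc hw hv (hq true) hle (h true)
  · have := dp_bool_exp_aux (w false) (w true) (v false) (v true) (q false) (q true) c d hc
      (by rw [add_comm]; exact hw) (by rw [add_comm]; exact hv) (hq false) hle (h false)
    calc w true * q true + w false * q false
        = w false * q false + w true * q true := by ring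
      _ ≤ c * (v false * q false + v true * q true) + d := this
      _ = c * (v true * q true + v false * q false) + d := by ring

/-- Main composition lemma: hybrid argument with truncation at `1` so that the `δ`'s add
up linearly. -/
lemma dp_main_ind {κ : Type*} [DecidableEq κ] (w v : κ → Bool → ℝ≥0∞) (c d : ℝ≥0∞)
    (hc : 1 ≤ c)
    (hw : ∀ k, w k true + w k false = 1) (hv : ∀ k, v k true + v k false = 1)
    (S : Finset κ) (heq : ∀ k ∉ S, w k = v k)
    (hdp : ∀ k ∈ S, ∀ b, w k b ≤ c * v k b + d) :
    ∀ s : Finset κ, ∀ T : Finset (κ → Bool),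
      (∀ g ∈ T, ∀ g' ∈ T, (∀ k ∈ s, g k = g' k) → g = g') →
      ∑ g ∈ T, ∏ k ∈ s, w k (g k)
        ≤ min 1 (c ^ (s ∩ S).card * ∑ g ∈ T, ∏ k ∈ s, v k (g k))
          + ((s ∩ S).card : ℝ≥0∞) * d := by
  intro s
  induction s using Finset.induction_on with
  | empty =>
    intro T hinj
    simp only [Finset.prod_empty, Finset.sum_const, nsmul_eq_mul, mul_one,
      Finset.empty_inter, Finset.card_empty, pow_zero, one_mul, Nat.cast_zero, zero_mul,
      add_zero]
    have hT : T.card ≤ 1 := Finset.card_le_one.mpr (fun a ha b hb => hinj a ha b hb (by simp))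
    have h1 : (T.card : ℝ≥0∞) ≤ 1 := by exact_mod_cast hT
    exact le_min h1 le_rfl
  | @insert k0 s' hk0 ih =>
    intro T hinj
    set Tt := T.filter (fun g => g k0 = true) with hTt
    set Tf := T.filter (fun g => ¬ g k0 = true) with hTf
    set qwt := ∑ g ∈ Tt, ∏ k ∈ s', w k (g k) with hqwt
    set qwf := ∑ g ∈ Tf, ∏ k ∈ s', w k (g k) with hqwf
    set qvt := ∑ g ∈ Tt, ∏ k ∈ s', v k (g k) with hqvt
    set qvf := ∑ g ∈ Tf, ∏ k ∈ s', v k (g k) with hqvf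
    set n := (s' ∩ S).card with hn
    -- injectivity of restrictions on the filtered sets
    have hinjt : ∀ g ∈ Tt, ∀ g' ∈ Tt, (∀ k ∈ s', g k = g' k) → g = g' := by
      intro g hg g' hg' hagree
      refine hinj g (Finset.mem_filter.mp hg).1 g' (Finset.mem_filter.mp hg').1 fun k hk => ?_
      rcases Finset.mem_insert.mp hk with rfl | hk
      · rw [(Finset.mem_filter.mp hg).2, (Finset.mem_filter.mp hg').2]
      · exact hagree k hk
    have hinjf : ∀ g ∈ Tf, ∀ g' ∈ Tf, (∀ k ∈ s', g k = g' k) → g = g' := by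
      intro g hg g' hg' hagree
      refine hinj g (Finset.mem_filter.mp hg).1 g' (Finset.mem_filter.mp hg').1 fun k hk => ?_
      rcases Finset.mem_insert.mp hk with rfl | hk
      · have h1 : g k = false := by simpa using (Finset.mem_filter.mp hg).2
        have h2 : g' k = false := by simpa using (Finset.mem_filter.mp hg').2
        rw [h1, h2]
      · exact hagree k hk
    have iht : qwt ≤ min 1 (c ^ n * qvt) + (n : ℝ≥0∞) * d := ih Tt hinjt
    have ihf : qwf ≤ min 1 (c ^ n * qvf) + (n : ℝ≥0∞) * d := ih Tf hinjf
    set rt := min 1 (c ^ n * qvt) with hrt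
    set rf := min 1 (c ^ n * qvf) with hrf
    have hsw : ∑ g ∈ T, ∏ k ∈ insert k0 s', w k (g k)
        = w k0 true * qwt + w k0 false * qwf := dp_split_sum w k0 s' hk0 T
    have hsv : ∑ g ∈ T, ∏ k ∈ insert k0 s', v k (g k)
        = v k0 true * qvt + v k0 false * qvf := dp_split_sum v k0 s' hk0 T
    -- the whole sum is at most 1
    have hle1 : ∑ g ∈ T, ∏ k ∈ insert k0 s', w k (g k) ≤ 1 :=
      dp_sum_prod_le_one w hw (insert k0 s') T hinj
    -- first bound: pull out the D' term
    have step1 : ∑ g ∈ T, ∏ k ∈ insert k0 s', w k (g k)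
        ≤ (w k0 true * rt + w k0 false * rf) + (n : ℝ≥0∞) * d := by
      rw [hsw]
      calc w k0 true * qwt + w k0 false * qwf
          ≤ w k0 true * (rt + (n : ℝ≥0∞) * d) + w k0 false * (rf + (n : ℝ≥0∞) * d) :=
            add_le_add (mul_le_mul_right iht _) (mul_le_mul_right ihf _)
        _ = (w k0 true * rt + w k0 false * rf) + (w k0 true + w k0 false) * ((n : ℝ≥0∞) * d) := by
            ring
        _ = (w k0 true * rt + w k0 false * rf) + (n : ℝ≥0∞) * d := by rw [hw k0, one_mul]
    by_cases hmem : k0 ∈ S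
    · -- differing coordinate
      have hcard : ((insert k0 s') ∩ S).card = n + 1 := by
        rw [Finset.insert_inter_of_mem hmem,
          Finset.card_insert_of_notMem (fun h => hk0 (Finset.mem_inter.mp h).1)]
      have hboole : w k0 true * rt + w k0 false * rf
          ≤ c * (v k0 true * rt + v k0 false * rf) + d := by
        refine dp_bool_exp (w k0) (v k0) (fun b => if b then rt else rf) c d hc (hw k0) (hv k0)
          ?_ (hdp k0 hmem)
        intro b; cases b <;> simp [hrt, hrf]
      have hvr : v k0 true * rt + v k0 false * rf
          ≤ c ^ n * (v k0 true * qvt + v k0 false * qvf) := by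
        calc v k0 true * rt + v k0 false * rf
            ≤ v k0 true * (c ^ n * qvt) + v k0 false * (c ^ n * qvf) :=
              add_le_add (mul_le_mul_right (min_le_right _ _) _)
                (mul_le_mul_right (min_le_right _ _) _)
          _ = c ^ n * (v k0 true * qvt + v k0 false * qvf) := by ring
      have hmain : ∑ g ∈ T, ∏ k ∈ insert k0 s', w k (g k)
          ≤ c ^ (n + 1) * ∑ g ∈ T, ∏ k ∈ insert k0 s', v k (g k)
            + ((n : ℝ≥0∞) + 1) * d := by
        rw [hsv]
        calc ∑ g ∈ T, ∏ k ∈ insert k0 s', w k (g k)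
            ≤ (w k0 true * rt + w k0 false * rf) + (n : ℝ≥0∞) * d := step1
          _ ≤ (c * (v k0 true * rt + v k0 false * rf) + d) + (n : ℝ≥0∞) * d :=
              add_le_add_left hboole _
          _ ≤ (c * (c ^ n * (v k0 true * qvt + v k0 false * qvf)) + d) + (n : ℝ≥0∞) * d :=
              add_le_add_left (add_le_add_left (mul_le_mul_right hvr _) _) _
          _ = c ^ (n + 1) * (v k0 true * qvt + v k0 false * qvf) + ((n : ℝ≥0∞) + 1) * d := by
              rw [pow_succ]; ring
      rw [hcard]
      rcases le_total 1 (c ^ (n + 1) * ∑ g ∈ T, ∏ k ∈ insert k0 s', v k (g k)) with h | h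
      · rw [min_eq_left h]
        push_cast
        calc ∑ g ∈ T, ∏ k ∈ insert k0 s', w k (g k) ≤ 1 := hle1
          _ ≤ 1 + ((n : ℝ≥0∞) + 1) * d := le_self_add
      · rw [min_eq_right h]
        push_cast
        exact hmain
    · -- non-differing coordinate
      have hcard : (insert k0 s') ∩ S = s' ∩ S := Finset.insert_inter_of_notMem hmem
      have heqk : w k0 = v k0 := heq k0 hmem
      have hmain : ∑ g ∈ T, ∏ k ∈ insert k0 s', w k (g k)
          ≤ c ^ n * ∑ g ∈ T, ∏ k ∈ insert k0 s', v k (g k) + (n : ℝ≥0∞) * d := by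
        rw [hsv]
        calc ∑ g ∈ T, ∏ k ∈ insert k0 s', w k (g k)
            ≤ (w k0 true * rt + w k0 false * rf) + (n : ℝ≥0∞) * d := step1
          _ = (v k0 true * rt + v k0 false * rf) + (n : ℝ≥0∞) * d := by rw [heqk]
          _ ≤ (v k0 true * (c ^ n * qvt) + v k0 false * (c ^ n * qvf)) + (n : ℝ≥0∞) * d :=
              add_le_add_left
                (add_le_add (mul_le_mul_right (min_le_right _ _) _)
                  (mul_le_mul_right (min_le_right _ _) _)) _
          _ = c ^ n * (v k0 true * qvt + v k0 false * qvf) + (n : ℝ≥0∞) * d := by ring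
      rw [hcard, ← hn]
      rcases le_total 1 (c ^ n * ∑ g ∈ T, ∏ k ∈ insert k0 s', v k (g k)) with h | h
      · rw [min_eq_left h]
        calc ∑ g ∈ T, ∏ k ∈ insert k0 s', w k (g k) ≤ 1 := hle1
          _ ≤ 1 + (n : ℝ≥0∞) * d := le_self_add
      · rw [min_eq_right h]
        exact hmain

theorem key_selection_stability_and_privacy
    {U κ : Type*} [DecidableEq U] [DecidableEq κ] [Fintype κ]
    (L : ℕ) (f : U → Finset κ) (hf : ∀ u, (f u).card ≤ L)
    (R : ℕ → ProbabilityMeasure Bool) (ε₀ δ₀ : ℝ) (hε₀ : 0 ≤ ε₀) (hδ₀ : 0 ≤ δ₀)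
    (hR0 : (R 0 : Measure Bool) {true} = 0)
    (hR : ∀ a a' : ℕ, a ≤ a' + 1 → a' ≤ a + 1 → ∀ o : Bool,
      (R a : Measure Bool) {o}
        ≤ ENNReal.ofReal (Real.exp ε₀) * (R a' : Measure Bool) {o} + ENNReal.ofReal δ₀)
    (D : Finset U) (u : U) (hu : u ∉ D) :
    ({k : κ | (0 < keyCount f D k) ≠ (0 < keyCount f (insert u D) k)} ⊆ ↑(f u)) ∧
    (∀ T : Set (κ → Bool), MeasurableSet T →
      Measure.pi (fun k => (R (keyCount f D k) : Measure Bool)) T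
        ≤ ENNReal.ofReal (Real.exp (L * ε₀))
            * Measure.pi (fun k => (R (keyCount f (insert u D) k) : Measure Bool)) T
          + ENNReal.ofReal (L * δ₀)) := by
  classical
  have hcount : ∀ k, keyCount f (insert u D) k
      = keyCount f D k + (if k ∈ f u then 1 else 0) := by
    intro k
    unfold keyCount
    rw [Finset.filter_insert]
    split_ifs with h
    · rw [Finset.card_insert_of_notMem (fun hmem => hu (Finset.mem_filter.mp hmem).1)]
    · rw [add_zero]
  constructor
  · intro k hk
    simp only [Set.mem_setOf_eq] at hk
    by_contra hkf
    have : keyCount f (insert u D) k = keyCount f D k := by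
      rw [hcount k, if_neg (by simpa using hkf), add_zero]
    exact hk (by rw [this])
  · intro T hT
    set μ := fun k : κ => (R (keyCount f D k) : Measure Bool) with hμ
    set ν := fun k : κ => (R (keyCount f (insert u D) k) : Measure Bool) with hν
    have hprob : ∀ n : ℕ, (R n : Measure Bool) {true} + (R n : Measure Bool) {false} = 1 := by
      intro n
      have hcompl : ({true} : Set Bool)ᶜ = {false} := by
        ext b; cases b <;> simp
      have h := measure_add_measure_compl (μ := (R n : Measure Bool))
        (measurableSet_singleton true)
      rw [hcompl] at h
      rw [h]
      exact (R n).2.measure_univ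
    -- measure of a set as a finite sum of singleton masses
    have hsum : ∀ (m : κ → Measure Bool) (_ : ∀ k, SigmaFinite (m k)) (A : Set (κ → Bool)),
        Measure.pi m A = ∑ g ∈ A.toFinite.toFinset, ∏ k, m k {g k} := by
      intro m hm A
      have h1 : A = ⋃ g ∈ A.toFinite.toFinset, ({g} : Set (κ → Bool)) := by
        ext g
        simp only [Set.mem_iUnion, Set.Finite.mem_toFinset, Set.mem_singleton_iff,
          exists_prop]
        exact ⟨fun h => ⟨g, h, rfl⟩, fun ⟨i, hi, e⟩ => e ▸ hi⟩
      have h2 : Measure.pi m A = ∑ g ∈ A.toFinite.toFinset, Measure.pi m {g} := by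
        conv_lhs => rw [h1]
        refine measure_biUnion_finset ?_ ?_
        · intro a _ b _ hab
          exact Set.disjoint_singleton.mpr hab
        · intro g _
          rw [← Set.univ_pi_singleton]
          exact MeasurableSet.univ_pi fun k => measurableSet_singleton _
      rw [h2]
      refine Finset.sum_congr rfl fun g _ => ?_
      rw [← Set.univ_pi_singleton, Measure.pi_pi]
    have hsigma : ∀ (n : ℕ), SigmaFinite (R n : Measure Bool) := fun n => by
      have := (R n).2; infer_instance
    set w := fun (k : κ) (b : Bool) => μ k {b} with hwdef
    set v := fun (k : κ) (b : Bool) => ν k {b} with hvdef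
    set c := ENNReal.ofReal (Real.exp ε₀) with hcdef
    set d := ENNReal.ofReal δ₀ with hddef
    have hc : 1 ≤ c := by
      rw [hcdef]
      exact ENNReal.one_le_ofReal.mpr (Real.one_le_exp hε₀)
    have hw : ∀ k, w k true + w k false = 1 := fun k => hprob _
    have hv : ∀ k, v k true + v k false = 1 := fun k => hprob _
    have heq : ∀ k ∉ f u, w k = v k := by
      intro k hk
      have : keyCount f (insert u D) k = keyCount f D k := by
        rw [hcount k, if_neg hk, add_zero]
      funext b
      simp only [hwdef, hvdef, hμ, hν, this]
    have hdp : ∀ k ∈ f u, ∀ b, w k b ≤ c * v k b + d := by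
      intro k hk b
      have hck : keyCount f (insert u D) k = keyCount f D k + 1 := by
        rw [hcount k, if_pos hk]
      simp only [hwdef, hvdef, hμ, hν, hck, hcdef, hddef]
      exact hR (keyCount f D k) (keyCount f D k + 1) (by omega) (by omega) b
    have hinj : ∀ g ∈ T.toFinite.toFinset, ∀ g' ∈ T.toFinite.toFinset,
        (∀ k ∈ (Finset.univ : Finset κ), g k = g' k) → g = g' := by
      intro g _ g' _ h
      funext k
      exact h k (Finset.mem_univ k)
    have hmain := dp_main_ind w v c d hc hw hv (f u) heq hdp Finset.univ
      T.toFinite.toFinset hinj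
    rw [Finset.univ_inter] at hmain
    set m := (f u).card with hm
    have hm_le : m ≤ L := hf u
    have hpow : c ^ m ≤ ENNReal.ofReal (Real.exp (L * ε₀)) := by
      rw [hcdef, ← ENNReal.ofReal_pow (Real.exp_nonneg _), ← Real.exp_nat_mul]
      exact ENNReal.ofReal_le_ofReal
        (Real.exp_le_exp.mpr (mul_le_mul_of_nonneg_right (Nat.cast_le.mpr hm_le) hε₀))
    have hd : (m : ℝ≥0∞) * d ≤ ENNReal.ofReal (L * δ₀) := by
      rw [hddef, ← ENNReal.ofReal_natCast, ← ENNReal.ofReal_mul (Nat.cast_nonneg m)]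
      exact ENNReal.ofReal_le_ofReal
        (mul_le_mul_of_nonneg_right (Nat.cast_le.mpr hm_le) hδ₀)
    calc Measure.pi μ T = ∑ g ∈ T.toFinite.toFinset, ∏ k, μ k {g k} :=
          hsum μ (fun k => hsigma _) T
      _ ≤ min 1 (c ^ m * ∑ g ∈ T.toFinite.toFinset, ∏ k, v k (g k)) + (m : ℝ≥0∞) * d :=
          hmain
      _ ≤ c ^ m * (∑ g ∈ T.toFinite.toFinset, ∏ k, ν k {g k}) + (m : ℝ≥0∞) * d :=
          add_le_add_left (min_le_right _ _) _
      _ = c ^ m * Measure.pi ν T + (m : ℝ≥0∞) * d := by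
          rw [hsum ν (fun k => hsigma _) T]
      _ ≤ ENNReal.ofReal (Real.exp (L * ε₀)) * Measure.pi ν T + ENNReal.ofReal (L * δ₀) :=
          add_le_add (mul_le_mul_left hpow _) hd
end
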